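/- Let s be a primitive string of length n over Σ, let π be a local ordering family (of order 1), and let x = x1x2⋯xm be a string with 2 ≤ m ≤ n. Let i_1 < i_2 < ⋯ < i_t be the elements of { i ∈ Rng(x2) : L[i] = x1 }, listed in increasing order, and assume Rng(x1x2) ≠ ∅ with b = min Rng(x1x2). Then Rng(x1x2⋯xm) = { b + r − 1 : 1 ≤ r ≤ t and i_r ∈ Rng(x2x3⋯xm) }. -/

import Mathlib

/-- The cyclic rotation of `s` by `r`: `s[r+1..n] s[1..r]`. -/
def rot {α : Type*} (s : List α) (r : ℕ) : List α := s.drop r ++ s.take r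

/-- A string is primitive if its cyclic rotations are pairwise distinct. -/
def IsPrimitive {α : Type*} (s : List α) : Prop :=
  ∀ r₁ r₂ : ℕ, r₁ < s.length → r₂ < s.length → rot s r₁ = rot s r₂ → r₁ = r₂

/-- The context adaptive order induced by a family `π` of linear orders on the
alphabet, one for each string (context): `u ≺ v` iff, `x = u[1..k] = v[1..k]`
being the longest common prefix of `u` and `v`, the symbol `u[k+1]` is
`π x`-smaller than `v[k+1]`. -/
def caLt {α : Type*} (π : List α → LinearOrder α) (u v : List α) : Prop :=
  ∃ (k : ℕ) (hu : k < u.length) (hv : k < v.length),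
    u.take k = v.take k ∧ (π (u.take k)).lt (u.get ⟨k, hu⟩) (v.get ⟨k, hv⟩)

/-- The matrix `M*(s)`: an enumeration of the cyclic rotations of `s`
listed in `≺`-increasing order; the `i`-th row is `row i`. -/
structure SortedRotMatrix {α : Type*} (π : List α → LinearOrder α) (s : List α) where
  row : Fin s.length → List α
  row_is_rot : ∀ i, ∃ r : Fin s.length, row i = rot s (r : ℕ)
  rot_is_row : ∀ r : Fin s.length, ∃ i, row i = rot s (r : ℕ)
  sorted : ∀ i j : Fin s.length, i < j → caLt π (row i) (row j)

/-- `Rng M x`: the set of row indices of `M*(s)` whose row has `x` as a prefix. -/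
def Rng {α : Type*} [DecidableEq α] {π : List α → LinearOrder α} {s : List α}
    (M : SortedRotMatrix π s) (x : List α) : Finset (Fin s.length) :=
  Finset.univ.filter (fun i => x <+: M.row i)

/-- `π` is a local ordering family (of order 1): the order `π x` depends only on
the last symbol of `x` (for nonempty `x`). -/
def IsLocalOrdering {α : Type*} (π : List α → LinearOrder α) : Prop :=
  ∀ x y : List α, x ≠ [] → y ≠ [] → x.getLast? = y.getLast? →
    ∀ a b : α, (π x).lt a b ↔ (π y).lt a b


section BWTAux

variable {α : Type*}

theorem rot_length (s : List α) (r : ℕ) : (rot s r).length = s.length := by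
  simp [rot]; omega

theorem caLt_irrefl (π : List α → LinearOrder α) (u : List α) : ¬ caLt π u u := by
  rintro ⟨k, hu, hv, -, hlt⟩
  letI := π (u.take k)
  exact lt_irrefl _ hlt

theorem take_eq_get {u v : List α} {k m : ℕ} (h : u.take k = v.take k)
    (hm : m < k) (hmu : m < u.length) (hmv : m < v.length) : u[m] = v[m] := by
  have h1 : (u.take k)[m]'(by simp; omega) = (v.take k)[m]'(by simp; omega) := by
    simp only [h]
  rwa [List.getElem_take, List.getElem_take] at h1

theorem caLt_asymm (π : List α → LinearOrder α) {u v : List α}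
    (h1 : caLt π u v) (h2 : caLt π v u) : False := by
  obtain ⟨k, hku, hkv, ht, hlt⟩ := h1
  obtain ⟨k', hk'v, hk'u, ht', hlt'⟩ := h2
  simp only [List.get_eq_getElem] at hlt hlt'
  rcases lt_trichotomy k k' with h | h | h
  · have he : v[k] = u[k] := take_eq_get ht' h hkv hku
    rw [he] at hlt
    letI := π (u.take k); exact lt_irrefl _ hlt
  · subst h
    rw [← ht] at hlt'
    letI := π (u.take k); exact lt_asymm hlt hlt'
  · have he : u[k'] = v[k'] := take_eq_get ht h hk'u hk'v
    rw [he] at hlt'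
    letI := π (v.take k'); exact lt_irrefl _ hlt'

theorem rot_eq_rotate {s : List α} {r : ℕ} (hr : r ≤ s.length) : rot s r = s.rotate r :=
  (List.rotate_eq_drop_append_take hr).symm

theorem rot_shift {s : List α} {r : ℕ} (hr : r < s.length) {c : α} {w : List α}
    (h : rot s r = c :: w) : ∃ r' : ℕ, r' < s.length ∧ rot s r' = w ++ [c] := by
  have hs : s.length ≠ 0 := by omega
  refine ⟨(r + 1) % s.length, Nat.mod_lt _ (by omega), ?_⟩
  rw [rot_eq_rotate (le_of_lt (Nat.mod_lt _ (by omega))), List.rotate_mod,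
    ← List.rotate_rotate, ← rot_eq_rotate hr.le, h]
  simp [List.rotate_cons_succ]

theorem rot_unshift {s : List α} {r : ℕ} (hr : r < s.length) {c : α} {w : List α}
    (h : rot s r = w ++ [c]) : ∃ r' : ℕ, r' < s.length ∧ rot s r' = c :: w := by
  have hs : s.length ≠ 0 := by omega
  refine ⟨(r + w.length) % s.length, Nat.mod_lt _ (by omega), ?_⟩
  rw [rot_eq_rotate (le_of_lt (Nat.mod_lt _ (by omega))), List.rotate_mod,
    ← List.rotate_rotate, ← rot_eq_rotate hr.le, h]
  rw [List.rotate_eq_drop_append_take (by simp), List.drop_left, List.take_left]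
  rfl

theorem prefix_append_of_le {y w z : List α} (h : y <+: w ++ z)
    (hl : y.length ≤ w.length) : y <+: w := by
  rw [List.prefix_iff_eq_take] at h ⊢
  rwa [List.take_append_of_le_length hl] at h

theorem getLast?_cons_of_ne_nil {a : α} {l : List α} (h : l ≠ []) :
    (a :: l).getLast? = l.getLast? := by
  cases l with
  | nil => exact absurd rfl h
  | cons b t => exact List.getLast?_cons_cons ..

variable {π : List α → LinearOrder α} {s : List α} (M : SortedRotMatrix π s)

theorem row_len (i : Fin s.length) : (M.row i).length = s.length := by
  obtain ⟨r, hr⟩ := M.row_is_rot i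
  rw [hr, rot_length]

theorem lt_of_caLt {i j : Fin s.length} (h : caLt π (M.row i) (M.row j)) : i < j := by
  rcases lt_trichotomy i j with h' | h' | h'
  · exact h'
  · exact absurd h (h' ▸ caLt_irrefl π _)
  · exact absurd (caLt_asymm π h (M.sorted j i h')) (fun f => f)

theorem row_inj {i j : Fin s.length} (h : M.row i = M.row j) : i = j := by
  rcases lt_trichotomy i j with h' | h' | h'
  · exact absurd (M.sorted i j h') (h ▸ caLt_irrefl π _)
  · exact h'
  · exact absurd (M.sorted j i h') (h ▸ caLt_irrefl π _)

theorem mem_Rng_iff [DecidableEq α] {y : List α} {i : Fin s.length} :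
    i ∈ Rng M y ↔ y <+: M.row i := by
  simp [Rng]

/-- `Rng` is an interval of row indices. -/
theorem mem_Rng_of_between [DecidableEq α] {y : List α} {i j k : Fin s.length}
    (hi : i ∈ Rng M y) (hj : j ∈ Rng M y) (h1 : i ≤ k) (h2 : k ≤ j) : k ∈ Rng M y := by
  rcases eq_or_lt_of_le h1 with rfl | h1; · exact hi
  rcases eq_or_lt_of_le h2 with rfl | h2; · exact hj
  rw [mem_Rng_iff] at hi hj ⊢
  rw [List.prefix_iff_eq_take] at hi hj ⊢
  obtain ⟨k1, hk1u, hk1v, ht1, hlt1⟩ := M.sorted i k h1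
  obtain ⟨k2, hk2v, hk2w, ht2, hlt2⟩ := M.sorted k j h2
  simp only [List.get_eq_getElem] at hlt1 hlt2
  set u := M.row i; set v := M.row k; set w := M.row j
  by_cases hc1 : y.length ≤ k1
  · have h := congrArg (List.take y.length) ht1
    rw [List.take_take, List.take_take, min_eq_left hc1] at h
    exact hi.trans h
  by_cases hc2 : y.length ≤ k2
  · have h := congrArg (List.take y.length) ht2
    rw [List.take_take, List.take_take, min_eq_left hc2] at h
    exact hj.trans h.symm
  push_neg at hc1 hc2
  exfalso
  have hyl_u : y.length ≤ u.length := by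
    have := congrArg List.length hi; simp only [List.length_take] at this; omega
  have hyl_w : y.length ≤ w.length := by
    have := congrArg List.length hj; simp only [List.length_take] at this; omega
  have hyu : ∀ m (hm : m < y.length), y[m]'hm = u[m]'(by omega) := by
    intro m hm
    have : y[m]'hm = (u.take y.length)[m]'(hi ▸ hm) := List.getElem_of_eq hi hm
    rwa [List.getElem_take] at this
  have hyw : ∀ m (hm : m < y.length), y[m]'hm = w[m]'(by omega) := by
    intro m hm
    have : y[m]'hm = (w.take y.length)[m]'(hj ▸ hm) := List.getElem_of_eq hj hm
    rwa [List.getElem_take] at this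
  rcases lt_trichotomy k1 k2 with h | h | h
  · have e1 : v[k1] = w[k1]'(by omega) := take_eq_get ht2 h hk1v (by omega)
    have e2 : y[k1]'(by omega) = w[k1]'(by omega) := hyw k1 (by omega)
    have e3 : y[k1]'(by omega) = u[k1] := hyu k1 (by omega)
    rw [e1.trans (e2.symm.trans e3)] at hlt1
    letI := π (u.take k1); exact lt_irrefl _ hlt1
  · subst h
    have e2 : y[k1]'(by omega) = w[k1] := hyw k1 (by omega)
    have e3 : y[k1]'(by omega) = u[k1] := hyu k1 (by omega)
    rw [← ht1] at hlt2
    rw [e2.symm.trans e3] at hlt2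
    letI := π (u.take k1); exact lt_asymm hlt1 hlt2
  · have e1 : u[k2]'(by omega) = v[k2]'(by omega) := take_eq_get ht1 h (by omega) (by omega)
    have e2 : y[k2]'(by omega) = w[k2] := hyw k2 (by omega)
    have e3 : y[k2]'(by omega) = u[k2]'(by omega) := hyu k2 (by omega)
    rw [e2.symm.trans (e3.trans e1)] at hlt2
    letI := π (v.take k2); exact lt_irrefl _ hlt2

theorem exists_unshift_row (hs : s ≠ []) (i : Fin s.length) :
    ∃ j c w, M.row i = w ++ [c] ∧ M.row j = c :: w := by
  obtain ⟨r, hr⟩ := M.row_is_rot i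
  have hne : M.row i ≠ [] := by
    intro h
    have := row_len M i
    rw [h] at this
    exact hs (List.length_eq_zero_iff.mp this.symm)
  have hdec0 : M.row i = (M.row i).dropLast ++ [(M.row i).getLast hne] :=
    (List.dropLast_append_getLast hne).symm
  have hdec : rot s (r : ℕ) = (M.row i).dropLast ++ [(M.row i).getLast hne] := by
    rw [← hr]; exact hdec0
  obtain ⟨r', hr', hrot⟩ := rot_unshift r.isLt hdec
  obtain ⟨j, hj⟩ := M.rot_is_row ⟨r', hr'⟩
  exact ⟨j, _, _, hdec0, by rw [hj]; exact hrot⟩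

theorem exists_shift_row (hs : s ≠ []) (i : Fin s.length) :
    ∃ j c w, M.row i = c :: w ∧ M.row j = w ++ [c] := by
  obtain ⟨r, hr⟩ := M.row_is_rot i
  have hne : M.row i ≠ [] := by
    intro h
    have := row_len M i
    rw [h] at this
    exact hs (List.length_eq_zero_iff.mp this.symm)
  obtain ⟨c, w, hcw⟩ := List.exists_cons_of_ne_nil hne
  have hdec : rot s (r : ℕ) = c :: w := by rw [← hr]; exact hcw
  obtain ⟨r', hr', hrot⟩ := rot_shift r.isLt hdec
  obtain ⟨j, hj⟩ := M.rot_is_row ⟨r', hr'⟩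
  exact ⟨j, c, w, hcw, by rw [hj]; exact hrot⟩

end BWTAux

/-- Backward-search step for local orderings: with `T = {i ∈ Rng [x₂] : L[i] = x₁}`
listed in increasing order as `i₁ < ⋯ < i_t`, and `b = min (Rng [x₁x₂])`, the
range `Rng (x₁x₂⋯x_m)` consists exactly of the indices `b + r − 1` for those
ranks `1 ≤ r ≤ t` with `i_r ∈ Rng (x₂⋯x_m)`. (Here the rank of `i ∈ T` is
`#{j ∈ T : j ≤ i}`, and `p = b + r − 1` is written as `p + 1 = b + r`.) -/
theorem rng_backward_search {α : Type*} [Fintype α] [Nonempty α] [DecidableEq α]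
    (π : List α → LinearOrder α) (hloc : IsLocalOrdering π)
    (s : List α) (hp : IsPrimitive s) (M : SortedRotMatrix π s)
    (x1 x2 : α) (rest : List α) (hm : 2 + rest.length ≤ s.length)
    (hne : (Rng M [x1, x2]).Nonempty) :
    ∀ p : Fin s.length, p ∈ Rng M (x1 :: x2 :: rest) ↔
      ∃ i ∈ (Rng M [x2]).filter (fun i => (M.row i).getLast? = some x1),
        i ∈ Rng M (x2 :: rest) ∧
        (p : ℕ) + 1 = ((Rng M [x1, x2]).min' hne : ℕ)
          + (((Rng M [x2]).filter (fun i => (M.row i).getLast? = some x1)).filter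
              (fun j => j ≤ i)).card := by
  classical
  intro p
  have hn2 : 2 ≤ s.length := by omega
  have hsne : s ≠ [] := by
    intro h; rw [h] at hm; simp at hm
  have hex : ∀ i : Fin s.length, ∃ j c w, M.row i = w ++ [c] ∧ M.row j = c :: w :=
    exists_unshift_row M hsne
  choose LF cf wf hdec hLF using hex
  set T := (Rng M [x2]).filter (fun i => (M.row i).getLast? = some x1) with hT
  set R := Rng M [x1, x2] with hR
  set b := R.min' hne with hb
  have hrowlen : ∀ i : Fin s.length, (M.row i).length = s.length := row_len M
  have hwlen : ∀ i : Fin s.length, (wf i).length = s.length - 1 := by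
    intro i
    have h := hrowlen i
    rw [hdec i] at h
    simp at h; omega
  have hcf : ∀ i ∈ T, cf i = x1 := by
    intro i hi
    rw [hT, Finset.mem_filter] at hi
    have h2 := hi.2
    rw [hdec i, List.getLast?_concat] at h2
    simpa using h2
  have hwx2 : ∀ i ∈ T, [x2] <+: wf i := by
    intro i hi
    rw [hT, Finset.mem_filter] at hi
    have h1 := (mem_Rng_iff M).mp hi.1
    rw [hdec i] at h1
    exact prefix_append_of_le h1 (by rw [hwlen]; simp; omega)
  have hrowLF : ∀ i ∈ T, M.row (LF i) = x1 :: wf i := by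
    intro i hi; rw [hLF i, hcf i hi]
  have hgetw : ∀ (j : Fin s.length) (m : ℕ) (hm : m < (wf j).length),
      (M.row j)[m]'(by rw [hrowlen]; have := hwlen j; omega) = (wf j)[m]'hm := by
    intro j m hm
    have h1 := List.getElem_of_eq (hdec j)
      (show m < (M.row j).length by rw [hrowlen]; have := hwlen j; omega)
    rw [h1]
    exact List.getElem_append_left hm
  have hstep1 : ∀ i ∈ T, LF i ∈ R := by
    intro i hi
    rw [hR, mem_Rng_iff]
    obtain ⟨t, ht⟩ := hwx2 i hi
    exact ⟨t, by rw [hrowLF i hi, ← ht]; rfl⟩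
  have hmono : ∀ i ∈ T, ∀ i' ∈ T, i < i' → LF i < LF i' := by
    intro i hi i' hi' hlt'
    obtain ⟨k, hk, hk', htake, hltc⟩ := M.sorted i i' hlt'
    simp only [List.get_eq_getElem] at hltc
    have hki : k < s.length := by rw [← hrowlen i]; exact hk
    obtain ⟨t, ht⟩ := hwx2 i hi
    obtain ⟨t', ht'⟩ := hwx2 i' hi'
    have hwne : (wf i).length = s.length - 1 := hwlen i
    have hwne' : (wf i').length = s.length - 1 := hwlen i'
    have hk0 : k ≠ 0 := by
      rintro rfl
      have e1 : (M.row i)[0]'hk = (wf i)[0]'(by omega) := hgetw i 0 (by omega)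
      have e1' : (wf i)[0]'(by omega) = x2 := by
        have := List.getElem_of_eq ht.symm (show 0 < (wf i).length by omega)
        rw [this]; rfl
      have e2 : (M.row i')[0]'hk' = (wf i')[0]'(by omega) := hgetw i' 0 (by omega)
      have e2' : (wf i')[0]'(by omega) = x2 := by
        have := List.getElem_of_eq ht'.symm (show 0 < (wf i').length by omega)
        rw [this]; rfl
      rw [e1.trans e1', e2.trans e2'] at hltc
      letI := π ((M.row i).take 0); exact lt_irrefl _ hltc
    have hkn : k ≠ s.length - 1 := by
      rintro hke
      have e1 : (M.row i)[k]'hk = cf i := by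
        rw [List.getElem_of_eq (hdec i) hk]
        exact List.getElem_concat_length (by omega) _
      have e2 : (M.row i')[k]'hk' = cf i' := by
        rw [List.getElem_of_eq (hdec i') hk']
        exact List.getElem_concat_length (by omega) _
      rw [e1, e2, hcf i hi, hcf i' hi'] at hltc
      letI := π ((M.row i).take k); exact lt_irrefl _ hltc
    have hkw : k < (wf i).length := by omega
    have hkw' : k < (wf i').length := by omega
    -- rewrite the comparison in terms of wf
    rw [hgetw i k hkw, hgetw i' k hkw'] at hltc
    have eqB : (M.row i).take k = (wf i).take k := by
      rw [hdec i]
      exact List.take_append_of_le_length (by omega)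
    rw [eqB] at hltc
    have hwtake : (wf i).take k = (wf i').take k := by
      have h1 := htake
      have hA : (wf i ++ [cf i]).take k = (wf i).take k :=
        List.take_append_of_le_length (by omega)
      have hB : (wf i' ++ [cf i']).take k = (wf i').take k :=
        List.take_append_of_le_length (by omega)
      rw [hdec i, hdec i', hA, hB] at h1
      exact h1
    have hXne : (wf i).take k ≠ [] := by
      intro h
      have h2 := congrArg List.length h
      rw [List.length_take, List.length_nil] at h2
      omega
    apply lt_of_caLt M
    have hl1 : k + 1 < (M.row (LF i)).length := by rw [hrowlen]; omega
    have hl2 : k + 1 < (M.row (LF i')).length := by rw [hrowlen]; omega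
    refine ⟨k + 1, hl1, hl2, ?_, ?_⟩
    · rw [hrowLF i hi, hrowLF i' hi', List.take_succ_cons, List.take_succ_cons, hwtake]
    · simp only [List.get_eq_getElem]
      have g1 : (M.row (LF i))[k+1]'hl1 = (wf i)[k]'hkw := by
        rw [List.getElem_of_eq (hrowLF i hi) hl1]
        exact List.getElem_cons_succ ..
      have g2 : (M.row (LF i'))[k+1]'hl2 = (wf i')[k]'hkw' := by
        rw [List.getElem_of_eq (hrowLF i' hi') hl2]
        exact List.getElem_cons_succ ..
      have eqA : (M.row (LF i)).take (k+1) = x1 :: (wf i).take k := by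
        rw [hrowLF i hi, List.take_succ_cons]
      rw [g1, g2, eqA]
      exact (hloc ((wf i).take k) (x1 :: (wf i).take k) hXne (by simp)
        (getLast?_cons_of_ne_nil hXne).symm _ _).mp hltc
  have hsurj : ∀ q ∈ R, ∃ i ∈ T, LF i = q := by
    intro q hq
    rw [hR, mem_Rng_iff] at hq
    obtain ⟨z, hz⟩ := hq
    obtain ⟨j, c, w, hcw, hjrow⟩ := exists_shift_row M hsne q
    have h3 : x1 :: x2 :: z = c :: w := by
      rw [← hcw, ← hz]; rfl
    injection h3 with hc1 h4
    have h5 : wf j ++ [cf j] = w ++ [c] := (hdec j).symm.trans hjrow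
    obtain ⟨hw2, hc2⟩ := List.append_inj' h5 rfl
    have hc2' : cf j = c := by injection hc2
    have hjT : j ∈ T := by
      rw [hT, Finset.mem_filter]
      constructor
      · rw [mem_Rng_iff]
        exact ⟨z ++ [c], by rw [hjrow, ← h4]; simp⟩
      · rw [hdec j, List.getLast?_concat, hc2', ← hc1]
    refine ⟨j, hjT, ?_⟩
    apply row_inj M
    rw [hLF j, hc2', hw2, ← hcw]
  have hrank : ∀ i ∈ T, (LF i : ℕ) + 1 = (b : ℕ) + (T.filter (fun j => j ≤ i)).card := by
    intro i hi
    have hbLF : b ≤ LF i := Finset.min'_le _ _ (hstep1 i hi)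
    have hRfilter : R.filter (fun q => q ≤ LF i) = Finset.Icc b (LF i) := by
      ext q
      simp only [Finset.mem_filter, Finset.mem_Icc]
      constructor
      · rintro ⟨hqR, hq⟩
        exact ⟨Finset.min'_le _ _ hqR, hq⟩
      · rintro ⟨h1, h2⟩
        exact ⟨mem_Rng_of_between M (Finset.min'_mem _ hne) (hstep1 i hi) h1 h2, h2⟩
    have hcard1 : (R.filter (fun q => q ≤ LF i)).card = (LF i : ℕ) + 1 - (b : ℕ) := by
      rw [hRfilter, Fin.card_Icc]
    have hcard2 : (T.filter (fun j => j ≤ i)).card = (R.filter (fun q => q ≤ LF i)).card := by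
      refine Finset.card_bij (fun j _ => LF j) ?_ ?_ ?_
      · intro j hj
        rw [Finset.mem_filter] at hj
        rw [Finset.mem_filter]
        refine ⟨hstep1 j hj.1, ?_⟩
        rcases eq_or_lt_of_le hj.2 with rfl | h
        · exact le_refl _
        · exact (hmono j hj.1 i hi h).le
      · intro j1 hj1 j2 hj2 hEq
        rw [Finset.mem_filter] at hj1 hj2
        rcases lt_trichotomy j1 j2 with h | h | h
        · exact absurd hEq (hmono j1 hj1.1 j2 hj2.1 h).ne
        · exact h
        · exact absurd hEq.symm (hmono j2 hj2.1 j1 hj1.1 h).ne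
      · intro q hq
        rw [Finset.mem_filter] at hq
        obtain ⟨j, hjT, hjq⟩ := hsurj q hq.1
        refine ⟨j, Finset.mem_filter.mpr ⟨hjT, ?_⟩, hjq⟩
        by_contra hji
        push_neg at hji
        have hml := hmono i hi j hjT hji
        rw [hjq] at hml
        exact absurd hq.2 hml.not_ge
    have hble : (b : ℕ) ≤ (LF i : ℕ) := hbLF
    rw [hcard2, hcard1]
    omega
  constructor
  · intro hpmem
    have hpR : p ∈ R := by
      rw [hR, mem_Rng_iff]
      rw [mem_Rng_iff] at hpmem
      exact List.IsPrefix.trans ⟨rest, rfl⟩ hpmem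
    obtain ⟨i, hiT, hLFi⟩ := hsurj p hpR
    refine ⟨i, hiT, ?_, ?_⟩
    · rw [mem_Rng_iff]
      rw [mem_Rng_iff] at hpmem
      rw [← hLFi, hrowLF i hiT] at hpmem
      have h6 := (List.cons_prefix_cons.mp hpmem).2
      have h7 : wf i <+: M.row i := by
        rw [hdec i]; exact List.prefix_append _ _
      exact h6.trans h7
    · rw [← hLFi]
      exact hrank i hiT
  · rintro ⟨i, hiT, hiRng, hpe⟩
    have h7 := hrank i hiT
    have hpi : p = LF i := by
      apply Fin.ext
      omega
    rw [hpi, mem_Rng_iff, hrowLF i hiT]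
    apply List.cons_prefix_cons.mpr
    refine ⟨rfl, ?_⟩
    rw [mem_Rng_iff, hdec i] at hiRng
    exact prefix_append_of_le hiRng (by rw [hwlen]; simp; omega)
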